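/- For every p ≥ 1 and every n ≥ 2, and any real random variables X₁,...,Xₙ, one has (E[max_i |Xᵢ|^p])^{1/p} ≤ 2 max_i (E[|Xᵢ|^{p·ℓ}])^{1/(p·ℓ)}, where ℓ = log₂ n. -/

import Mathlib

open MeasureTheory

theorem stmt1 {Ω : Type*} [MeasurableSpace Ω] (μ : Measure Ω) [IsProbabilityMeasure μ]
    (p : ℝ) (hp : 1 ≤ p) (n : ℕ) (hn : 2 ≤ n) (X : Fin n → Ω → ℝ)
    (ℓ : ℝ) (hℓ : ℓ = Real.logb 2 n)
    (hint : ∀ i, Integrable (fun ω => |X i ω| ^ (p * ℓ)) μ)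
    (hmax : Integrable (fun ω => (⨆ i, |X i ω|) ^ p) μ) :
    (∫ ω, (⨆ i, |X i ω|) ^ p ∂μ) ^ (1 / p) ≤
      2 * ⨆ i, (∫ ω, |X i ω| ^ (p * ℓ) ∂μ) ^ (1 / (p * ℓ)) := by
  have hn1 : (1:ℝ) < (n:ℝ) := by exact_mod_cast Nat.lt_of_lt_of_le one_lt_two hn
  have hℓ1 : 1 ≤ ℓ := by
    rw [hℓ]
    calc (1:ℝ) = Real.logb 2 2 := (Real.logb_self_eq_one one_lt_two).symm
    _ ≤ Real.logb 2 n := (Real.logb_le_logb one_lt_two two_pos (by linarith)).mpr (by exact_mod_cast hn)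
  have hℓ0 : 0 < ℓ := lt_of_lt_of_le one_pos hℓ1
  have hp0 : 0 < p := lt_of_lt_of_le one_pos hp
  have hq0 : 0 < p * ℓ := mul_pos hp0 hℓ0
  haveI : Nonempty (Fin n) := ⟨⟨0, by omega⟩⟩
  set q := p * ℓ with hq
  set S : Ω → ℝ := fun ω => ∑ i, |X i ω| ^ q with hS
  have hS0 : ∀ ω, 0 ≤ S ω := fun ω =>
    Finset.sum_nonneg fun i _ => Real.rpow_nonneg (abs_nonneg _) _
  have hSint : Integrable S μ := integrable_finset_sum _ fun i _ => hint i
  have hcont : Continuous fun x : ℝ => x ^ (1/ℓ) := by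
    rw [continuous_iff_continuousAt]
    exact fun x => Real.continuousAt_rpow_const x _ (Or.inr (by positivity))
  -- pointwise bound
  have hpt : ∀ ω, (⨆ i, |X i ω|) ^ p ≤ S ω ^ (1/ℓ) := by
    intro ω
    obtain ⟨j, hj⟩ := Finite.exists_max fun i => |X i ω|
    have hsup : (⨆ i, |X i ω|) = |X j ω| :=
      le_antisymm (ciSup_le hj) (le_ciSup (f := fun i => |X i ω|) (Set.Finite.bddAbove (Set.finite_range _)) j)
    rw [hsup]
    have h1 : |X j ω| ^ p = (|X j ω| ^ q) ^ (1/ℓ) := by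
      rw [← Real.rpow_mul (abs_nonneg _)]
      congr 1
      field_simp [hq]
      exact hq.symm
    rw [h1]
    refine Real.rpow_le_rpow (Real.rpow_nonneg (abs_nonneg _) _) ?_ (by positivity)
    exact Finset.single_le_sum (f := fun i => |X i ω| ^ q)
      (fun i _ => Real.rpow_nonneg (abs_nonneg _) _) (Finset.mem_univ j)
  -- integrability of S ^ (1/ℓ)
  have hSℓint : Integrable (fun ω => S ω ^ (1/ℓ)) μ := by
    refine Integrable.mono ((integrable_const (1:ℝ)).add hSint)
      (hcont.comp_aestronglyMeasurable hSint.1) (ae_of_all _ fun ω => ?_)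
    simp only [Pi.add_apply, Real.norm_eq_abs]
    rw [abs_of_nonneg (Real.rpow_nonneg (hS0 ω) _),
      abs_of_nonneg (by linarith [hS0 ω] : (0:ℝ) ≤ 1 + S ω)]
    rcases le_or_gt (S ω) 1 with h | h
    · have := Real.rpow_le_one (z := 1/ℓ) (hS0 ω) h (by positivity)
      linarith [hS0 ω]
    · have h2 : S ω ^ (1/ℓ) ≤ S ω ^ (1:ℝ) :=
        Real.rpow_le_rpow_of_exponent_le h.le (by
          rw [div_le_one hℓ0]; exact hℓ1)
      rw [Real.rpow_one] at h2
      linarith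
  -- Jensen's inequality
  have hjensen : ∫ ω, S ω ^ (1/ℓ) ∂μ ≤ (∫ ω, S ω ∂μ) ^ (1/ℓ) := by
    have := ConcaveOn.le_map_integral (μ := μ) (f := S) (g := fun x : ℝ => x ^ (1/ℓ))
      (Real.concaveOn_rpow (by positivity) (by rw [div_le_one hℓ0]; exact hℓ1))
      hcont.continuousOn isClosed_Ici (ae_of_all _ fun ω => hS0 ω) hSint hSℓint
    exact this
  -- bound the integral of S
  set M : ℝ := ⨆ i, (∫ ω, |X i ω| ^ q ∂μ) ^ (1/q) with hM
  have hM0 : 0 ≤ M := le_trans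
    (Real.rpow_nonneg (integral_nonneg fun ω => Real.rpow_nonneg (abs_nonneg _) _) _)
    (le_ciSup (f := fun i => (∫ ω, |X i ω| ^ q ∂μ) ^ (1/q)) (Set.Finite.bddAbove (Set.finite_range _)) (Classical.arbitrary (Fin n)))
  have hterm : ∀ i : Fin n, ∫ ω, |X i ω| ^ q ∂μ ≤ M ^ q := by
    intro i
    have ha0 : 0 ≤ ∫ ω, |X i ω| ^ q ∂μ :=
      integral_nonneg fun ω => Real.rpow_nonneg (abs_nonneg _) _
    have h1 : (∫ ω, |X i ω| ^ q ∂μ) ^ (1/q) ≤ M :=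
      le_ciSup (f := fun i => (∫ ω, |X i ω| ^ q ∂μ) ^ (1/q)) (Set.Finite.bddAbove (Set.finite_range _)) i
    calc ∫ ω, |X i ω| ^ q ∂μ = ((∫ ω, |X i ω| ^ q ∂μ) ^ (1/q)) ^ q := by
          rw [← Real.rpow_mul ha0, one_div_mul_cancel hq0.ne', Real.rpow_one]
      _ ≤ M ^ q := Real.rpow_le_rpow (Real.rpow_nonneg ha0 _) h1 hq0.le
  have hSsum : ∫ ω, S ω ∂μ ≤ (n:ℝ) * M ^ q := by
    rw [hS, integral_finset_sum _ fun i _ => hint i]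
    calc ∑ i, ∫ ω, |X i ω| ^ q ∂μ ≤ ∑ _i : Fin n, M ^ q :=
          Finset.sum_le_sum fun i _ => hterm i
      _ = (n:ℝ) * M ^ q := by simp [mul_comm]
  -- n ^ (1/ℓ) = 2
  have hn2 : (n:ℝ) ^ (1/ℓ) = 2 := by
    rw [Real.rpow_def_of_pos (by positivity), hℓ, Real.logb, one_div, inv_div,
      mul_comm, div_mul_cancel₀ _ (Real.log_pos hn1).ne', Real.exp_log two_pos]
  -- combine
  have hmain : ∫ ω, (⨆ i, |X i ω|) ^ p ∂μ ≤ 2 * M ^ p := by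
    calc ∫ ω, (⨆ i, |X i ω|) ^ p ∂μ ≤ ∫ ω, S ω ^ (1/ℓ) ∂μ :=
          integral_mono hmax hSℓint hpt
      _ ≤ (∫ ω, S ω ∂μ) ^ (1/ℓ) := hjensen
      _ ≤ ((n:ℝ) * M ^ q) ^ (1/ℓ) :=
          Real.rpow_le_rpow (integral_nonneg hS0) hSsum (by positivity)
      _ = 2 * M ^ p := by
          rw [Real.mul_rpow (by positivity) (by positivity), hn2,
            ← Real.rpow_mul hM0]
          congr 2
          field_simp [hq]
          rw [hq, mul_comm]
  have hLHS0 : 0 ≤ ∫ ω, (⨆ i, |X i ω|) ^ p ∂μ := by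
    refine integral_nonneg fun ω => Real.rpow_nonneg ?_ _
    exact le_trans (abs_nonneg _) (le_ciSup (f := fun i => |X i ω|)
      (Set.Finite.bddAbove (Set.finite_range _)) (Classical.arbitrary (Fin n)))
  calc (∫ ω, (⨆ i, |X i ω|) ^ p ∂μ) ^ (1/p) ≤ (2 * M ^ p) ^ (1/p) :=
        Real.rpow_le_rpow hLHS0 hmain (by positivity)
    _ = 2 ^ (1/p) * M := by
        rw [Real.mul_rpow (by norm_num) (Real.rpow_nonneg hM0 _),
          ← Real.rpow_mul hM0, mul_one_div, div_self hp0.ne', Real.rpow_one]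
    _ ≤ 2 * M := by
        have h2 : (2:ℝ) ^ (1/p) ≤ 2 ^ (1:ℝ) :=
          Real.rpow_le_rpow_of_exponent_le one_le_two (by rw [div_le_one hp0]; exact hp)
        rw [Real.rpow_one] at h2
        exact mul_le_mul_of_nonneg_right h2 hM0
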